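/- An unmixed tree with more than one facet cannot have exactly two facets; i.e., if Δ is a connected unmixed tree with at least two facets, then Δ has at least three facets. -/
import Mathlib


open Finset

variable {α : Type*} [DecidableEq α]

/-- A set of vertices meeting every facet. -/
def IsVertexCover (Δ : Finset (Finset α)) (A : Finset α) : Prop :=
  ∀ F ∈ Δ, (A ∩ F).Nonempty

/-- A vertex cover none of whose proper subsets is a cover. -/
def IsMinimalVertexCover (Δ : Finset (Finset α)) (A : Finset α) : Prop :=
  IsVertexCover Δ A ∧ ∀ B ⊆ A, IsVertexCover Δ B → B = A

/-- The vertex covering number α(Δ). -/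
noncomputable def coverNum (Δ : Finset (Finset α)) : ℕ :=
  sInf {n | ∃ A : Finset α, IsVertexCover Δ A ∧ A.card = n}

/-- All minimal vertex covers have the same cardinality. -/
def Unmixed (Δ : Finset (Finset α)) : Prop :=
  ∀ A B : Finset α, IsMinimalVertexCover Δ A → IsMinimalVertexCover Δ B →
    A.card = B.card

/-- `F` is a leaf of `Δ`: it is the only facet, or some facet `G ≠ F`
satisfies `F ∩ F' ⊆ F ∩ G` for every facet `F' ≠ F`. -/
def IsLeaf (Δ : Finset (Finset α)) (F : Finset α) : Prop :=
  F ∈ Δ ∧ (Δ = {F} ∨ ∃ G ∈ Δ, G ≠ F ∧ ∀ F' ∈ Δ, F' ≠ F → F ∩ F' ⊆ F ∩ G)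

/-- `G` is a joint of the leaf `F` in `Δ`. -/
def IsJoint (Δ : Finset (Finset α)) (G F : Finset α) : Prop :=
  F ∈ Δ ∧ G ∈ Δ ∧ G ≠ F ∧ (∀ F' ∈ Δ, F' ≠ F → F ∩ F' ⊆ F ∩ G) ∧
    (F ∩ G).Nonempty

def HasLeaf (Δ : Finset (Finset α)) : Prop := ∃ F, IsLeaf Δ F

/-- Every nonempty subcollection has a leaf. -/
def IsForest (Δ : Finset (Finset α)) : Prop :=
  ∀ Γ ⊆ Δ, Γ.Nonempty → HasLeaf Γ

/-- Any two facets are linked by a chain of facets with consecutive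
nonempty intersections. -/
def ComplexConnected (Δ : Finset (Finset α)) : Prop :=
  ∀ F ∈ Δ, ∀ G ∈ Δ,
    Relation.ReflTransGen (fun A B => A ∈ Δ ∧ B ∈ Δ ∧ (A ∩ B).Nonempty) F G

def IsTree (Δ : Finset (Finset α)) : Prop := ComplexConnected Δ ∧ IsForest Δ

/-- An independent (pairwise disjoint) set of facets of `Δ`. -/
def IndependentFacets (Δ S : Finset (Finset α)) : Prop :=
  S ⊆ Δ ∧ ∀ F ∈ S, ∀ G ∈ S, F ≠ G → F ∩ G = ∅

/-- The independence number β(Δ). -/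
noncomputable def indepNum (Δ : Finset (Finset α)) : ℕ :=
  sSup {n | ∃ S : Finset (Finset α), IndependentFacets Δ S ∧ S.card = n}

/-- An independent set of facets not properly contained in another. -/
def MaximalIndependent (Δ S : Finset (Finset α)) : Prop :=
  IndependentFacets Δ S ∧ ∀ T, IndependentFacets Δ T → S ⊆ T → T = S

/-- `v` is a free vertex of the facet `F`: it belongs to no other facet. -/
def FreeVertex (Δ : Finset (Finset α)) (v : α) (F : Finset α) : Prop :=
  F ∈ Δ ∧ v ∈ F ∧ ∀ G ∈ Δ, v ∈ G → G = F

/-- The facets form an antichain (they are the maximal faces). -/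
def FacetAntichain (Δ : Finset (Finset α)) : Prop :=
  ∀ F ∈ Δ, ∀ G ∈ Δ, F ⊆ G → F = G

/-- A connected unmixed tree with at least two facets has at least three
facets. -/
theorem unmixed_tree_not_two_facets (Δ : Finset (Finset α))
    (hmax : FacetAntichain Δ) (hne : ∀ F ∈ Δ, F.Nonempty)
    (htree : IsTree Δ) (hunmixed : Unmixed Δ) (hcard : 2 ≤ Δ.card) :
    3 ≤ Δ.card := by
  by_contra h
  push_neg at h
  have h2 : Δ.card = 2 := le_antisymm (by omega) hcard
  obtain ⟨F, G, hFG, hΔ⟩ := Finset.card_eq_two.mp h2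
  have hF : F ∈ Δ := by rw [hΔ]; simp
  have hG : G ∈ Δ := by rw [hΔ]; simp
  have hmem : ∀ A ∈ Δ, A = F ∨ A = G := by
    intro A hA; rw [hΔ] at hA; simpa using hA
  -- connectedness gives F ∩ G nonempty
  have key : ∀ B, Relation.ReflTransGen
      (fun A B => A ∈ Δ ∧ B ∈ Δ ∧ (A ∩ B).Nonempty) F B →
      B = F ∨ (F ∩ B).Nonempty := by
    intro B hB
    induction hB with
    | refl => exact Or.inl rfl
    | @tail A B hFA hstep ih =>
      obtain ⟨hA, hB, hAB⟩ := hstep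
      rcases hmem B hB with rfl | rfl
      · exact Or.inl rfl
      · rcases hmem A hA with rfl | rfl
        · exact Or.inr hAB
        · rcases ih with h' | h'
          · exact absurd h'.symm hFG
          · exact Or.inr h'
  have hFGne : (F ∩ G).Nonempty := by
    rcases key G (htree.1 F hF G hG) with h' | h'
    · exact absurd h'.symm hFG
    · exact h'
  obtain ⟨x, hx⟩ := hFGne
  have hxF : x ∈ F := (Finset.mem_inter.mp hx).1
  have hxG : x ∈ G := (Finset.mem_inter.mp hx).2
  have hFnG : ¬ F ⊆ G := fun hs => hFG (hmax F hF G hG hs)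
  have hGnF : ¬ G ⊆ F := fun hs => hFG (hmax G hG F hF hs).symm
  obtain ⟨a, haF, haG⟩ := Finset.not_subset.mp hFnG
  obtain ⟨b, hbG, hbF⟩ := Finset.not_subset.mp hGnF
  have hab : a ≠ b := fun e => hbF (e ▸ haF)
  have covx : IsMinimalVertexCover Δ {x} := by
    constructor
    · intro A hA
      rcases hmem A hA with rfl | rfl
      · exact ⟨x, by simp [hxF]⟩
      · exact ⟨x, by simp [hxG]⟩
    · intro B hB hcov
      rcases Finset.subset_singleton_iff.mp hB with rfl | rfl
      · obtain ⟨y, hy⟩ := hcov F hF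
        simp at hy
      · rfl
  have covab : IsMinimalVertexCover Δ {a, b} := by
    constructor
    · intro A hA
      rcases hmem A hA with rfl | rfl
      · exact ⟨a, by simp [haF]⟩
      · exact ⟨b, by simp [hbG]⟩
    · intro B hB hcov
      have haB : a ∈ B := by
        obtain ⟨y, hy⟩ := hcov F hF
        rw [Finset.mem_inter] at hy
        rcases Finset.mem_insert.mp (hB hy.1) with rfl | hy2
        · exact hy.1
        · rw [Finset.mem_singleton] at hy2
          exact absurd (hy2 ▸ hy.2) hbF
      have hbB : b ∈ B := by
        obtain ⟨y, hy⟩ := hcov G hG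
        rw [Finset.mem_inter] at hy
        rcases Finset.mem_insert.mp (hB hy.1) with rfl | hy2
        · exact absurd hy.2 haG
        · rw [Finset.mem_singleton] at hy2
          exact hy2 ▸ hy.1
      apply Finset.Subset.antisymm hB
      intro y hy
      rcases Finset.mem_insert.mp hy with rfl | hy2
      · exact haB
      · exact Finset.mem_singleton.mp hy2 ▸ hbB
  have := hunmixed _ _ covx covab
  rw [Finset.card_singleton, Finset.card_insert_of_notMem (by simp [hab]),
    Finset.card_singleton] at this
  omega
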